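/- Assume r ≥ 2. The element (r_0 r_1 ⋯ r_{r-1} r_r)^{-(r-1)} · (r_{r-1} r_{r-2} ⋯ r_1) of W commutes with s_0. -/

import Mathlib

noncomputable section

open CoxeterSystem
open Fin.NatCast

/-- The Coxeter matrix of the affine Weyl group of type `Ã_{2r}`:
vertices `0, …, 2r` arranged in a cycle mod `N = 2r+1`; `m i j = 3` if
`i - j ≡ ±1 (mod N)`, `m i j = 2` for other off-diagonal pairs. -/
def affACoxeterMatrix (r : ℕ) : CoxeterMatrix (Fin (2 * r + 1)) where
  M i j := if i = j then 1 else if i = j + 1 ∨ j = i + 1 then 3 else 2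
  isSymm := by
    apply Matrix.IsSymm.ext
    intro i j
    by_cases h : j = i
    · subst h; rfl
    · rw [if_neg h, if_neg (fun hh : i = j => h hh.symm)]
      exact if_congr or_comm rfl rfl
  diagonal i := if_pos rfl
  off_diagonal i j h := by
    try dsimp only
    rw [if_neg h]
    split <;> omega

/-- The affine Weyl group `W` of type `Ã_{2r}`, as the Coxeter group of the above matrix. -/
abbrev AffW (r : ℕ) : Type := (affACoxeterMatrix r).Group

/-- The canonical Coxeter system on `AffW r`. -/
def affCS (r : ℕ) : CoxeterSystem (affACoxeterMatrix r) (AffW r) :=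
  (affACoxeterMatrix r).toCoxeterSystem

/-- The simple reflection `s i` (index taken mod `2r+1`). -/
def sgen (r i : ℕ) : AffW r := (affCS r).simple ((i : ℕ) : Fin (2 * r + 1))

/-- The word in the simple reflections representing the generator `r_i` of the
relative Weyl group: `r_0 = s_0`, `r_i = s_i s_{2r+1-i}` for `1 ≤ i ≤ r-1`,
`r_r = s_r s_{r+1} s_r`. -/
def rword (r : ℕ) : ℕ → List (Fin (2 * r + 1)) := fun i =>
  if i = 0 then [(0 : Fin (2 * r + 1))]
  else if i < r then [((i : ℕ) : Fin (2 * r + 1)), ((2 * r + 1 - i : ℕ) : Fin (2 * r + 1))]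
  else [((r : ℕ) : Fin (2 * r + 1)), ((r + 1 : ℕ) : Fin (2 * r + 1)), ((r : ℕ) : Fin (2 * r + 1))]

/-- The element `r_i` of `W`. -/
def rgen (r i : ℕ) : AffW r := (affCS r).wordProd (rword r i)

/-- The list `[a, a+1, …, b]` (empty if `b < a`). -/
def ascSeq (a b : ℕ) : List ℕ := List.range' a (b + 1 - a)

/-- The list `[b, b-1, …, a]` (empty if `b < a`). -/
def descSeq (a b : ℕ) : List ℕ := (List.range' a (b + 1 - a)).reverse

/-- The expansion, as a word in the simple reflections, of the block
`r_0 r_1 ⋯ r_{r-1} r_r r_{r-1} ⋯ r_k`. -/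
def blockWord (r k : ℕ) : List (Fin (2 * r + 1)) :=
  ((ascSeq 0 r ++ descSeq k (r - 1)).map (rword r)).flatten

/-- The element `r_0 r_1 ⋯ r_{r-1} r_r r_{r-1} ⋯ r_k` of `W`. -/
def blockEl (r k : ℕ) : AffW r := (affCS r).wordProd (blockWord r k)

/-- The expansion, as a word in the simple reflections, of
`ϖ_k = (r_0 r_1 ⋯ r_{r-1} r_r r_{r-1} ⋯ r_k)^k`. -/
def piWord (r k : ℕ) : List (Fin (2 * r + 1)) :=
  (List.replicate k (blockWord r k)).flatten

/-- The element `ϖ_k = (r_0 r_1 ⋯ r_{r-1} r_r r_{r-1} ⋯ r_k)^k` of `W`. -/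
def piEl (r k : ℕ) : AffW r := (affCS r).wordProd (piWord r k)

/-- The expansion of the full block `r_0 r_1 ⋯ r_{r-1} r_r` as a word. -/
def fullBlockWord (r : ℕ) : List (Fin (2 * r + 1)) :=
  ((ascSeq 0 r).map (rword r)).flatten

/-- The element `r_0 r_1 ⋯ r_{r-1} r_r` of `W`. -/
def fullBlockEl (r : ℕ) : AffW r := (affCS r).wordProd (fullBlockWord r)



namespace St11
variable {r : ℕ}

/-- simple reflection indexed by a natural number mod `2r+1`. -/
def S (r x : ℕ) : AffW r := (affCS r).simple ((x : ℕ) : Fin (2*r+1))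

lemma sgen_eq_S : sgen r 0 = S r 0 := rfl

lemma S_eq_of_mod (x y : ℕ) (h : x % (2*r+1) = y % (2*r+1)) : S r x = S r y := by
  unfold S
  congr 1
  exact Fin.ext (by simpa using h)

lemma cast_add_one (x : ℕ) : ((x+1 : ℕ) : Fin (2*r+1)) = ((x : ℕ) : Fin (2*r+1)) + 1 := by
  push_cast
  rfl

lemma not_modeq (a d : ℕ) (h1 : 1 ≤ d) (h2 : d ≤ 2*r) : ¬ (a + d) ≡ a [MOD 2*r+1] := by
  intro h
  have h3 : (2*r+1) ∣ (a + d - a) := (Nat.modEq_iff_dvd' (Nat.le_add_right a d)).mp h.symm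
  rw [Nat.add_sub_cancel_left] at h3
  have := Nat.le_of_dvd (by omega) h3
  omega

lemma idx_ne (x y : ℕ) (h : ¬ x ≡ y [MOD 2*r+1]) :
    ((x : ℕ) : Fin (2*r+1)) ≠ ((y : ℕ) : Fin (2*r+1)) := by
  intro hc
  exact h (by simpa [Fin.ext_iff, Nat.ModEq] using hc)

/-- commutation of non-adjacent simple reflections -/
lemma S_comm (c a : ℕ) (h1 : ¬ c ≡ a [MOD 2*r+1]) (h2 : ¬ c ≡ a + 1 [MOD 2*r+1])
    (h3 : ¬ a ≡ c + 1 [MOD 2*r+1]) : Commute (S r c) (S r a) := by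
  have hM : (affACoxeterMatrix r) ((c : ℕ) : Fin (2*r+1)) ((a : ℕ) : Fin (2*r+1)) = 2 := by
    show (if _ then _ else _) = 2
    rw [if_neg (idx_ne c a h1), if_neg]
    rintro (hc | hc)
    · exact idx_ne c (a+1) h2 (by rw [hc, cast_add_one])
    · exact idx_ne a (c+1) h3 (by rw [hc, cast_add_one])
  have hpow := (affCS r).simple_mul_simple_pow ((c : ℕ) : Fin (2*r+1)) ((a : ℕ) : Fin (2*r+1))
  rw [hM, pow_two] at hpow
  have : S r c * S r a = (S r c * S r a)⁻¹ := by
    rw [eq_inv_iff_mul_eq_one]; exact hpow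
  unfold Commute SemiconjBy
  calc S r c * S r a = (S r c * S r a)⁻¹ := this
    _ = (S r a)⁻¹ * (S r c)⁻¹ := mul_inv_rev _ _
    _ = S r a * S r c := by simp only [S, (affCS r).inv_simple]

/-- commutation when `c = a + u`, `2 ≤ u ≤ 2r-1` -/
lemma S_comm_far (c a u : ℕ) (hc : c = a + u) (hu1 : 2 ≤ u) (hu2 : u + 1 ≤ 2*r) :
    Commute (S r c) (S r a) := by
  subst hc
  refine S_comm _ _ (not_modeq a u (by omega) (by omega)) ?_ ?_
  · have : a + u = (a+1) + (u-1) := by omega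
    rw [this]
    exact not_modeq (a+1) (u-1) (by omega) (by omega)
  · intro h
    exact not_modeq a (u+1) (by omega) (by omega) h.symm

lemma braid (a : ℕ) (hr : 1 ≤ r) :
    S r a * S r (a+1) * S r a = S r (a+1) * S r a * S r (a+1) := by
  have hne : ((a : ℕ) : Fin (2*r+1)) ≠ ((a+1 : ℕ) : Fin (2*r+1)) :=
    idx_ne a (a+1) (fun h => not_modeq a 1 le_rfl (by omega) h.symm)
  have hM : (affACoxeterMatrix r) ((a : ℕ) : Fin (2*r+1)) ((a+1 : ℕ) : Fin (2*r+1)) = 3 := by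
    show (if _ then _ else _) = 3
    rw [if_neg hne, if_pos (Or.inr (cast_add_one a))]
  have hpow := (affCS r).simple_mul_simple_pow ((a : ℕ) : Fin (2*r+1)) ((a+1 : ℕ) : Fin (2*r+1))
  rw [hM] at hpow
  set x := S r a
  set y := S r (a+1)
  have h3 : x * y * x * (y * x * y) = 1 := by
    have : (x*y)^3 = 1 := hpow
    rw [pow_succ, pow_two] at this
    group at this ⊢
    exact this
  have : x * y * x = (y * x * y)⁻¹ := by
    rw [eq_inv_iff_mul_eq_one]; exact h3
  rw [this, mul_inv_rev, mul_inv_rev]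
  simp only [x, y, S, (affCS r).inv_simple, mul_assoc]

lemma S_mul_self (x : ℕ) : S r x * S r x = 1 :=
  (affCS r).simple_mul_simple_self _

/-- `Tel m a = s_a s_{a+1} ⋯ s_{a+m} ⋯ s_{a+1} s_a`, the word for the
transposition `(a, a+m+1)`. -/
def Tel (r : ℕ) : ℕ → ℕ → AffW r
  | 0, a => S r a
  | (m+1), a => S r a * Tel r m (a+1) * S r a

lemma Tel_zero (a : ℕ) : Tel r 0 a = S r a := rfl

lemma Tel_succ (m a : ℕ) : Tel r (m+1) a = S r a * Tel r m (a+1) * S r a := rfl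

/-- grow-right: `Tel (m+1) a = s_{a+m+1} (Tel m a) s_{a+m+1}` -/
lemma Tel_grow_right (hr : 2 ≤ r) : ∀ m a : ℕ, m + 3 ≤ 2*r+1 →
    Tel r (m+1) a = S r (a+m+1) * Tel r m a * S r (a+m+1)
  | 0, a, _ => by
    rw [Tel_succ, Tel_zero, Tel_zero]
    show S r a * S r (a+1) * S r a = S r (a+1) * S r a * S r (a+1)
    exact braid a (by omega)
  | (m+1), a, hm => by
    rw [Tel_succ]
    rw [Tel_grow_right hr m (a+1) (by omega)]
    have e1 : a+1+m+1 = a+(m+2) := by omega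
    have e2 : a+(m+1)+1 = a+(m+2) := by omega
    rw [e1, e2]
    have hc : Commute (S r (a+(m+2))) (S r a) := S_comm_far _ _ (m+2) rfl (by omega) (by omega)
    calc S r a * (S r (a+(m+2)) * Tel r m (a+1) * S r (a+(m+2))) * S r a
        = (S r a * S r (a+(m+2))) * Tel r m (a+1) * (S r (a+(m+2)) * S r a) := by
          simp only [mul_assoc]
      _ = (S r (a+(m+2)) * S r a) * Tel r m (a+1) * (S r a * S r (a+(m+2))) := by
          rw [hc.eq, hc.symm.eq]
      _ = S r (a+(m+2)) * (S r a * Tel r m (a+1) * S r a) * S r (a+(m+2)) := by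
          simp only [mul_assoc]
      _ = S r (a+(m+2)) * Tel r (m+1) a * S r (a+(m+2)) := by rw [Tel_succ]

/-- a far-away generator commutes with `Tel` letterwise. -/
lemma S_comm_Tel : ∀ (m a c : ℕ), (∀ t, t ≤ m → Commute (S r c) (S r (a+t))) →
    Commute (S r c) (Tel r m a)
  | 0, a, c, h => by
    rw [Tel_zero]
    simpa using h 0 le_rfl
  | (m+1), a, c, h => by
    rw [Tel_succ]
    have h0 : Commute (S r c) (S r a) := by simpa using h 0 (by omega)
    have h1 : Commute (S r c) (Tel r m (a+1)) := by
      apply S_comm_Tel m (a+1) c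
      intro t ht
      have e : a+1+t = a+(t+1) := by omega
      rw [e]
      exact h (t+1) (by omega)
    exact (h0.mul_right h1).mul_right h0

/-- interior letters commute with `Tel`. -/
lemma S_interior_comm_Tel (hr : 2 ≤ r) : ∀ (m a t : ℕ), 1 ≤ t → t + 1 ≤ m → m + 2 ≤ 2*r+1 →
    Commute (S r (a+t)) (Tel r m a)
  | 0, _, _, ht1, ht2, _ => by omega
  | 1, _, _, ht1, ht2, _ => by omega
  | 2, a, t, ht1, ht2, hm => by
    have ht : t = 1 := by omega
    subst ht
    rw [Tel_succ, Tel_succ, Tel_zero]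
    set x := S r a
    set y := S r (a+1)
    set z := S r (a+1+1)
    have bxy : x * y * x = y * x * y := braid a (by omega)
    have byz : y * z * y = z * y * z := braid (a+1) (by omega)
    have cxz : Commute (S r (a+1+1)) (S r a) := S_comm_far _ _ 2 (by omega) (by omega) (by omega)
    show y * (x * (y * z * y) * x) = (x * (y * z * y) * x) * y
    calc y * (x * (y * z * y) * x)
        = (y * x * y) * (z * (y * x)) := by simp only [mul_assoc]
      _ = (x * y * x) * (z * (y * x)) := by rw [bxy]
      _ = x * y * ((x * z) * (y * x)) := by simp only [mul_assoc]
      _ = x * y * ((z * x) * (y * x)) := by rw [cxz.symm.eq]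
      _ = x * (y * z) * (x * y * x) := by simp only [mul_assoc]
      _ = x * (y * z) * (y * x * y) := by rw [bxy]
      _ = (x * (y * z * y) * x) * y := by simp only [mul_assoc]
  | (m+3), a, t, ht1, ht2, hm => by
    by_cases h2 : 2 ≤ t
    · rw [Tel_succ]
      have hca : Commute (S r (a+t)) (S r a) :=
        S_comm_far _ _ t rfl (by omega) (by omega)
      have hct : Commute (S r (a+t)) (Tel r (m+2) (a+1)) := by
        have e : a + t = (a+1) + (t-1) := by omega
        rw [e]
        exact S_interior_comm_Tel hr (m+2) (a+1) (t-1) (by omega) (by omega) (by omega)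
      exact (hca.mul_right hct).mul_right hca
    · have ht : t = 1 := by omega
      subst ht
      rw [Tel_grow_right hr (m+2) a (by omega)]
      have hca : Commute (S r (a+1)) (S r (a+(m+2)+1)) := by
        have e : a+(m+2)+1 = (a+1) + (m+2) := by omega
        rw [e]
        exact (S_comm_far _ _ (m+2) rfl (by omega) (by omega)).symm
      have hct : Commute (S r (a+1)) (Tel r (m+2) a) :=
        S_interior_comm_Tel hr (m+2) a 1 le_rfl (by omega) (by omega)
      exact (hca.mul_right hct).mul_right hca

/-- the reflection `U k`, swapping `-k` and `k+1` modulo `N`. -/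
def U (r k : ℕ) : AffW r := Tel r (2*k) (2*r+1-k)

lemma U_zero : U r 0 = sgen r 0 := by
  show Tel r 0 (2*r+1-0) = sgen r 0
  rw [Nat.sub_zero, Tel_zero, sgen_eq_S]
  exact S_eq_of_mod _ _ (by simp [Nat.mod_self])

lemma rgen_zero : rgen r 0 = S r 0 := by
  unfold rgen rword
  rw [if_pos rfl]
  simp [(affCS r).wordProd_cons, (affCS r).wordProd_nil]
  rfl

lemma rgen_two (j : ℕ) (h1 : 1 ≤ j) (h2 : j < r) : rgen r j = S r j * S r (2*r+1-j) := by
  unfold rgen rword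
  rw [if_neg (by omega), if_pos h2]
  simp [(affCS r).wordProd_cons, (affCS r).wordProd_nil, mul_assoc]
  rfl

lemma rgen_top (hr : 2 ≤ r) : rgen r r = S r r * S r (r+1) * S r r := by
  unfold rgen rword
  rw [if_neg (by omega), if_neg (by omega)]
  simp [(affCS r).wordProd_cons, (affCS r).wordProd_nil, mul_assoc]
  simp only [S, cast_add_one]

/-- Statement (A): conjugation by `r_{k+1}` sends `U k` to `U (k+1)`. -/
lemma conj_rgen (hr : 2 ≤ r) (k : ℕ) (hk : k ≤ r-2) :
    rgen r (k+1) * U r k = U r (k+1) * rgen r (k+1) := by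
  have hrg : rgen r (k+1) = S r (k+1) * S r (2*r-k) := by
    rw [rgen_two (k+1) (by omega) (by omega)]
    congr 2
    omega
  have hU1 : U r (k+1) = S r (2*r-k) * (S r (k+1) * U r k * S r (k+1)) * S r (2*r-k) := by
    show Tel r (2*(k+1)) (2*r+1-(k+1)) = _
    have e1 : 2*(k+1) = (2*k+1)+1 := by omega
    have e2 : 2*r+1-(k+1) = 2*r-k := by omega
    rw [e1, e2, Tel_succ]
    have e3 : 2*r-k+1 = 2*r+1-k := by omega
    rw [e3]
    rw [Tel_grow_right hr (2*k) (2*r+1-k) (by omega)]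
    have e4 : S r (2*r+1-k+(2*k)+1) = S r (k+1) := by
      apply S_eq_of_mod
      have e5 : 2*r+1-k+(2*k)+1 = (2*r+1)+(k+1) := by omega
      rw [e5, Nat.add_mod_left]
    rw [e4]
    rfl
  set p := S r (k+1)
  set q := S r (2*r-k)
  set u := U r k
  have hpq : Commute q p := S_comm_far (2*r-k) (k+1) (2*r-2*k-1) (by omega) (by omega) (by omega)
  have hpp : p * p = 1 := S_mul_self (k+1)
  have hqq : q * q = 1 := S_mul_self (2*r-k)
  have hsq : (p*q)*(p*q) = 1 := by
    calc (p*q)*(p*q) = p*((q*p)*q) := by simp only [mul_assoc]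
      _ = p*((p*q)*q) := by rw [hpq.eq]
      _ = (p*p)*(q*q) := by simp only [mul_assoc]
      _ = 1 := by rw [hpp, hqq, one_mul]
  rw [hrg, hU1]
  calc (p * q) * u
      = (q * p) * u := by rw [hpq.eq]
    _ = (q * (p * u)) * 1 := by rw [mul_one]; simp only [mul_assoc]
    _ = (q * (p * u)) * ((p*q)*(p*q)) := by rw [hsq]
    _ = q * (p * u * p) * q * (p * q) := by simp only [mul_assoc]

/-- Statement (A) accumulated: conjugating `s₀` by `r_j ⋯ r_1` gives `U j`. -/
lemma Dside (hr : 2 ≤ r) : ∀ j, j ≤ r-1 →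
    ((descSeq 1 j).map (rgen r)).prod * sgen r 0 = U r j * ((descSeq 1 j).map (rgen r)).prod
  | 0, _ => by
    have : descSeq 1 0 = [] := rfl
    rw [this, U_zero]
    simp
  | (j+1), hj => by
    have hds : descSeq 1 (j+1) = (j+1) :: descSeq 1 j := by
      unfold descSeq
      rw [show j+1+1-1 = j+1 by omega, show j+1-1 = j by omega, List.range'_1_concat]
      rw [List.reverse_append]
      simp [Nat.add_comm]
    rw [hds, List.map_cons, List.prod_cons]
    have ih := Dside hr j (by omega)
    calc rgen r (j+1) * ((descSeq 1 j).map (rgen r)).prod * sgen r 0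
        = rgen r (j+1) * (((descSeq 1 j).map (rgen r)).prod * sgen r 0) := by
          simp only [mul_assoc]
      _ = rgen r (j+1) * (U r j * ((descSeq 1 j).map (rgen r)).prod) := by rw [ih]
      _ = (rgen r (j+1) * U r j) * ((descSeq 1 j).map (rgen r)).prod := by
          simp only [mul_assoc]
      _ = (U r (j+1) * rgen r (j+1)) * ((descSeq 1 j).map (rgen r)).prod := by
          rw [conj_rgen hr j (by omega)]
      _ = U r (j+1) * (rgen r (j+1) * ((descSeq 1 j).map (rgen r)).prod) := by
          simp only [mul_assoc]

lemma flatten_prod : ∀ l : List ℕ,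
    (affCS r).wordProd ((l.map (rword r)).flatten) = (l.map (rgen r)).prod
  | [] => by simp [(affCS r).wordProd_nil]
  | (x :: l) => by
    rw [List.map_cons, List.map_cons, List.flatten_cons, (affCS r).wordProd_append,
      List.prod_cons, flatten_prod l]
    rfl

lemma fullBlockEl_eq : fullBlockEl r = ((List.range' 0 (r+1)).map (rgen r)).prod := by
  unfold fullBlockEl fullBlockWord ascSeq
  rw [flatten_prod]
  norm_num

/-- each `r_j`, `k+2 ≤ j ≤ r`, commutes with `U k`. -/
lemma rgen_comm_U (hr : 2 ≤ r) (k : ℕ) (hk : k ≤ r-2) (j : ℕ) (hj1 : k+2 ≤ j) (hj2 : j ≤ r) :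
    Commute (rgen r j) (U r k) := by
  have hUdef : U r k = Tel r (2*k) (2*r+1-k) := rfl
  have key : ∀ c u0 : ℕ, (∀ t, t ≤ 2*k → 2*r+1-k+t = c + (u0+t)) →
      2 ≤ u0 → u0 + 2*k + 1 ≤ 2*r → Commute (S r c) (U r k) := by
    intro c u0 heq h2 h3
    rw [hUdef]
    apply S_comm_Tel
    intro t ht
    exact (S_comm_far _ c (u0+t) (heq t ht) (by omega) (by omega)).symm
  rcases eq_or_lt_of_le hj2 with hjr | hjr
  · rw [hjr, rgen_top hr]
    have c1 : Commute (S r r) (U r k) :=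
      key r (r+1-k) (fun t ht => by omega) (by omega) (by omega)
    have c2 : Commute (S r (r+1)) (U r k) :=
      key (r+1) (r-k) (fun t ht => by omega) (by omega) (by omega)
    exact (c1.mul_left c2).mul_left c1
  · rw [rgen_two j (by omega) hjr]
    have c1 : Commute (S r j) (U r k) :=
      key j (2*r+1-k-j) (fun t ht => by omega) (by omega) (by omega)
    have c2 : Commute (S r (2*r+1-j)) (U r k) :=
      key (2*r+1-j) (j-k) (fun t ht => by omega) (by omega) (by omega)
    exact c1.mul_left c2

/-- each `r_j`, `j ≤ k`, commutes with `U (k+1)`. -/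
lemma rgen_comm_U' (hr : 2 ≤ r) (k : ℕ) (hk : k ≤ r-2) (j : ℕ) (hj : j ≤ k) :
    Commute (rgen r j) (U r (k+1)) := by
  have hUdef : U r (k+1) = Tel r (2*k+2) (2*r-k) := by
    show Tel r (2*(k+1)) (2*r+1-(k+1)) = _
    rw [show 2*(k+1) = 2*k+2 by omega, show 2*r+1-(k+1) = 2*r-k by omega]
  have key : ∀ c t : ℕ, c % (2*r+1) = (2*r-k+t) % (2*r+1) → 1 ≤ t → t + 1 ≤ 2*k+2 →
      Commute (S r c) (U r (k+1)) := by
    intro c t hmod ht1 ht2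
    rw [hUdef, S_eq_of_mod c (2*r-k+t) hmod]
    exact S_interior_comm_Tel hr (2*k+2) (2*r-k) t ht1 ht2 (by omega)
  rcases Nat.eq_zero_or_pos j with hj0 | hj0
  · subst hj0
    rw [rgen_zero]
    apply key 0 (k+1)
    · rw [show 2*r-k+(k+1) = 2*r+1 by omega]
      simp [Nat.mod_self]
    · omega
    · omega
  · rw [rgen_two j hj0 (by omega)]
    have c1 : Commute (S r j) (U r (k+1)) := by
      apply key j (k+1+j)
      · rw [show 2*r-k+(k+1+j) = 2*r+1+j by omega, Nat.add_mod_left]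
      · omega
      · omega
    have c2 : Commute (S r (2*r+1-j)) (U r (k+1)) := by
      apply key (2*r+1-j) (k+1-j)
      · rw [show 2*r-k+(k+1-j) = 2*r+1-j by omega]
      · omega
      · omega
    exact c1.mul_left c2 |>.symm.symm

lemma prod_comm_U (hr : 2 ≤ r) (k : ℕ) (hk : k ≤ r-2) :
    ∀ (n s0 : ℕ), k+2 ≤ s0 → s0 + n ≤ r+1 →
      Commute (((List.range' s0 n).map (rgen r)).prod) (U r k)
  | 0, s0, _, _ => by simp [Commute.one_left]
  | (n+1), s0, h1, h2 => by
    rw [List.range'_succ, List.map_cons, List.prod_cons]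
    exact (rgen_comm_U hr k hk s0 h1 (by omega)).mul_left
      (prod_comm_U hr k hk n (s0+1) (by omega) (by omega))

lemma prod_comm_U' (hr : 2 ≤ r) (k : ℕ) (hk : k ≤ r-2) :
    ∀ (n s0 : ℕ), s0 + n ≤ k+1 →
      Commute (((List.range' s0 n).map (rgen r)).prod) (U r (k+1))
  | 0, s0, _ => by simp [Commute.one_left]
  | (n+1), s0, h2 => by
    rw [List.range'_succ, List.map_cons, List.prod_cons]
    exact (rgen_comm_U' hr k hk s0 (by omega)).mul_left
      (prod_comm_U' hr k hk n (s0+1) (by omega))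

/-- Statement (B): conjugation by the full block sends `U k` to `U (k+1)`. -/
lemma conj_block (hr : 2 ≤ r) (k : ℕ) (hk : k ≤ r-2) :
    fullBlockEl r * U r k = U r (k+1) * fullBlockEl r := by
  have hsplit : List.range' 0 (r+1) =
      List.range' 0 (k+1) ++ [k+1] ++ List.range' (k+2) (r-k-1) := by
    have h1 : List.range' 0 (k+1) ++ List.range' (0+(k+1)) (r-k) = List.range' 0 ((r-k)+(k+1)) :=
      by rw [List.range'_append_1, Nat.add_comm (k+1) (r-k)]
    have h2 : List.range' (k+1) (r-k) = (k+1) :: List.range' (k+2) (r-k-1) := by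
      obtain ⟨n, hn⟩ : ∃ n, r - k = n + 1 := ⟨r-k-1, by omega⟩
      rw [hn, List.range'_succ, show n = r-k-1 from by omega]
      norm_num
    rw [show r+1 = (r-k)+(k+1) by omega, ← h1, show 0+(k+1) = k+1 by omega, h2]
    simp
  rw [fullBlockEl_eq, hsplit]
  rw [List.map_append, List.map_append, List.prod_append, List.prod_append]
  set C := ((List.range' 0 (k+1)).map (rgen r)).prod
  set E := ((List.range' (k+2) (r-k-1)).map (rgen r)).prod
  have hE : Commute E (U r k) := prod_comm_U hr k hk (r-k-1) (k+2) le_rfl (by omega)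
  have hC : Commute C (U r (k+1)) := prod_comm_U' hr k hk (k+1) 0 (by omega)
  have hmid : ([k+1].map (rgen r)).prod = rgen r (k+1) := by simp
  rw [hmid]
  calc (C * rgen r (k+1) * E) * U r k
      = C * rgen r (k+1) * (E * U r k) := by simp only [mul_assoc]
    _ = C * rgen r (k+1) * (U r k * E) := by rw [hE.eq]
    _ = C * (rgen r (k+1) * U r k) * E := by simp only [mul_assoc]
    _ = C * (U r (k+1) * rgen r (k+1)) * E := by rw [conj_rgen hr k hk]
    _ = (C * U r (k+1)) * (rgen r (k+1) * E) := by simp only [mul_assoc]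
    _ = (U r (k+1) * C) * (rgen r (k+1) * E) := by rw [hC.eq]
    _ = U r (k+1) * (C * rgen r (k+1) * E) := by simp only [mul_assoc]

lemma Fside (hr : 2 ≤ r) : ∀ e, e ≤ r-1 →
    fullBlockEl r ^ e * sgen r 0 = U r e * fullBlockEl r ^ e
  | 0, _ => by rw [pow_zero, one_mul, mul_one, U_zero]
  | (e+1), he => by
    rw [pow_succ']
    calc fullBlockEl r * fullBlockEl r ^ e * sgen r 0
        = fullBlockEl r * (fullBlockEl r ^ e * sgen r 0) := by simp only [mul_assoc]
      _ = fullBlockEl r * (U r e * fullBlockEl r ^ e) := by rw [Fside hr e (by omega)]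
      _ = (fullBlockEl r * U r e) * fullBlockEl r ^ e := by simp only [mul_assoc]
      _ = (U r (e+1) * fullBlockEl r) * fullBlockEl r ^ e := by
          rw [conj_block hr e (by omega)]
      _ = U r (e+1) * (fullBlockEl r * fullBlockEl r ^ e) := by simp only [mul_assoc]

end St11

/-- For `r ≥ 2`, the element
`(r_0 r_1 ⋯ r_{r-1} r_r)^{-(r-1)} · (r_{r-1} r_{r-2} ⋯ r_1)` of `W` commutes with `s_0`. -/
theorem statement11 (r : ℕ) (hr : 2 ≤ r) :
    (fullBlockEl r ^ (r - 1))⁻¹ * ((descSeq 1 (r - 1)).map (rgen r)).prod * sgen r 0 =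
      sgen r 0 * ((fullBlockEl r ^ (r - 1))⁻¹ * ((descSeq 1 (r - 1)).map (rgen r)).prod) := by
  classical
  have hD := St11.Dside (r := r) hr (r-1) le_rfl
  have hF := St11.Fside (r := r) hr (r-1) le_rfl
  set p := fullBlockEl r ^ (r-1) with hp
  set d := ((descSeq 1 (r-1)).map (rgen r)).prod with hd
  have h1 : p⁻¹ * St11.U r (r-1) = sgen r 0 * p⁻¹ := by
    have hU : St11.U r (r-1) = p * sgen r 0 * p⁻¹ :=
      (mul_inv_eq_iff_eq_mul.mpr hF).symm
    rw [hU]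
    simp only [mul_assoc]
    rw [inv_mul_cancel_left]
  calc p⁻¹ * d * sgen r 0
      = p⁻¹ * (d * sgen r 0) := by simp only [mul_assoc]
    _ = p⁻¹ * (St11.U r (r-1) * d) := by rw [hD]
    _ = (p⁻¹ * St11.U r (r-1)) * d := by simp only [mul_assoc]
    _ = (sgen r 0 * p⁻¹) * d := by rw [h1]
    _ = sgen r 0 * (p⁻¹ * d) := by simp only [mul_assoc]
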